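/- Truncated scaled likelihood ratio is a bounded e-variable: for ε > 0, define tsLR_ε(x) = e^{−ε} + (1 − e^{−ε})·min(1 + e^ε, dQ/dP(x)). Then E^P[tsLR_ε] ≤ 1 and log tsLR_ε(x) ∈ [−ε, ε] for all x. -/

import Mathlib

open MeasureTheory

/-- The truncated scaled likelihood ratio
`tsLR_ε(x) = e^{−ε} + (1 − e^{−ε})·min(1 + e^ε, dQ/dP(x))` is an e-variable for `P`
with `log tsLR_ε ∈ [−ε, ε]` pointwise. -/
theorem tsLR_evariable {X : Type*} [MeasurableSpace X]
    (P Q : Measure X) [IsProbabilityMeasure P] [IsProbabilityMeasure Q]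
    (hQP : Q ≪ P) (ε : ℝ) (hε : 0 < ε) :
    (∫ x, (Real.exp (-ε) + (1 - Real.exp (-ε)) *
        min (1 + Real.exp ε) ((Q.rnDeriv P x).toReal)) ∂P ≤ 1) ∧
    (∀ x, |Real.log (Real.exp (-ε) + (1 - Real.exp (-ε)) *
        min (1 + Real.exp ε) ((Q.rnDeriv P x).toReal))| ≤ ε) := by
  have hb : (0:ℝ) ≤ 1 - Real.exp (-ε) := by
    have : Real.exp (-ε) ≤ 1 := Real.exp_le_one_iff.mpr (by linarith)
    linarith
  have hrn : Integrable (fun x => (Q.rnDeriv P x).toReal) P :=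
    Measure.integrable_toReal_rnDeriv
  have hmin : Integrable (fun x => min (1 + Real.exp ε) ((Q.rnDeriv P x).toReal)) P :=
    (integrable_const (1 + Real.exp ε)).inf hrn
  constructor
  · have h1 : ∫ x, min (1 + Real.exp ε) ((Q.rnDeriv P x).toReal) ∂P ≤ 1 := by
      calc ∫ x, min (1 + Real.exp ε) ((Q.rnDeriv P x).toReal) ∂P
          ≤ ∫ x, (Q.rnDeriv P x).toReal ∂P :=
            integral_mono hmin hrn fun x => min_le_right _ _
        _ = (Q Set.univ).toReal := Measure.integral_toReal_rnDeriv hQP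
        _ = 1 := by simp
    rw [integral_add (integrable_const _) (hmin.const_mul _), integral_const,
      integral_const_mul]
    simp only [measure_univ, probReal_univ, ENNReal.toReal_one, smul_eq_mul, one_mul]
    nlinarith [h1]
  · intro x
    set t := min (1 + Real.exp ε) ((Q.rnDeriv P x).toReal) with ht
    have ht0 : 0 ≤ t := le_min (by positivity) ENNReal.toReal_nonneg
    have htu : t ≤ 1 + Real.exp ε := min_le_left _ _
    have hlo : Real.exp (-ε) ≤ Real.exp (-ε) + (1 - Real.exp (-ε)) * t := by nlinarith
    have hhi : Real.exp (-ε) + (1 - Real.exp (-ε)) * t ≤ Real.exp ε := by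
      have h1 : Real.exp (-ε) * Real.exp ε = 1 := by
        rw [← Real.exp_add]; simp
      nlinarith [Real.exp_pos ε, Real.exp_pos (-ε)]
    have hpos : 0 < Real.exp (-ε) + (1 - Real.exp (-ε)) * t :=
      lt_of_lt_of_le (Real.exp_pos _) hlo
    rw [abs_le]
    constructor
    · calc -ε = Real.log (Real.exp (-ε)) := (Real.log_exp _).symm
        _ ≤ _ := Real.log_le_log (Real.exp_pos _) hlo
    · calc Real.log (Real.exp (-ε) + (1 - Real.exp (-ε)) * t)
          ≤ Real.log (Real.exp ε) := Real.log_le_log hpos hhi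
        _ = ε := Real.log_exp _
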